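/- BinomialHash is monotone: for every n ≥ 1, every ω ≥ 1, every hash sequence h : ℕ → ℕ and every seeded hash H : ℕ → ℕ → ℕ, lookup(n + 1, h, H) = lookup(n, h, H) or lookup(n + 1, h, H) = n. That is, when a new bucket n is added to a cluster of n buckets, every key either keeps its bucket or moves to the new bucket. -/

import Mathlib

/-- Relocation within a level: `reloc H b x = b` if `b < 2`, otherwise
`2^d + (H x (2^d − 1)) % 2^d` with `d = Nat.log 2 b`. -/
def reloc (H : ℕ → ℕ → ℕ) (b x : ℕ) : ℕ :=
  if b < 2 then b
  else 2 ^ Nat.log 2 b + (H x (2 ^ Nat.log 2 b - 1)) % 2 ^ Nat.log 2 b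

/-- The main loop of BinomialHash: starting at iteration `i` with `fuel`
remaining iterations, compute `c = reloc(h i % E, h i)`; if `c < M` fall back to
the minor tree, if `c < n` return `c`, otherwise continue; after the last
iteration fall back to the minor tree. -/
def binLoop (H : ℕ → ℕ → ℕ) (n M E : ℕ) (h : ℕ → ℕ) : ℕ → ℕ → ℕ
  | _, 0 => reloc H (h 0 % M) (h 0)
  | i, fuel + 1 =>
      let c := reloc H (h i % E) (h i)
      if c < M then reloc H (h 0 % M) (h 0)
      else if c < n then c
      else binLoop H n M E h (i + 1) fuel

/-- The BinomialHash lookup with at most `ω` loop iterations: returns `0` when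
`n = 1`, and otherwise runs the loop with `E = 2^l`, `M = 2^(l-1)`,
`l = Nat.clog 2 n`. -/
def binomialLookup (ω n : ℕ) (h : ℕ → ℕ) (H : ℕ → ℕ → ℕ) : ℕ :=
  if n = 1 then 0
  else binLoop H n (2 ^ (Nat.clog 2 n - 1)) (2 ^ Nat.clog 2 n) h 0 ω

lemma reloc_lt_pow (H : ℕ → ℕ → ℕ) {b k : ℕ} (x : ℕ) (hb : b < 2 ^ k) :
    reloc H b x < 2 ^ k := by
  unfold reloc
  split_ifs with h2
  · exact hb
  · push_neg at h2
    have hb0 : b ≠ 0 := by omega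
    have hlog : Nat.log 2 b < k := Nat.log_lt_of_lt_pow hb0 hb
    have : 2 ^ Nat.log 2 b + (H x (2 ^ Nat.log 2 b - 1)) % 2 ^ Nat.log 2 b
        < 2 ^ (Nat.log 2 b + 1) := by
      have := Nat.mod_lt (H x (2 ^ Nat.log 2 b - 1))
        (show 0 < 2 ^ Nat.log 2 b from Nat.pow_pos (by norm_num))
      simpa [pow_succ, two_mul] using by omega
    exact lt_of_lt_of_le this (Nat.pow_le_pow_right (by norm_num) hlog)

lemma pow_le_reloc (H : ℕ → ℕ → ℕ) {b k : ℕ} (x : ℕ) (hb : 2 ^ k ≤ b) :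
    2 ^ k ≤ reloc H b x := by
  unfold reloc
  split_ifs with h2
  · exact hb
  · push_neg at h2
    have hb0 : b ≠ 0 := by omega
    have hlog : k ≤ Nat.log 2 b := (Nat.le_log_iff_pow_le (by norm_num) hb0).mpr hb
    calc 2 ^ k ≤ 2 ^ Nat.log 2 b := Nat.pow_le_pow_right (by norm_num) hlog
      _ ≤ _ := Nat.le_add_right _ _

lemma binLoop_add_one (H : ℕ → ℕ → ℕ) (n M E : ℕ) (h : ℕ → ℕ) :
    ∀ fuel i, binLoop H (n + 1) M E h i fuel = binLoop H n M E h i fuel ∨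
      binLoop H (n + 1) M E h i fuel = n := by
  intro fuel
  induction fuel with
  | zero => intro i; left; rfl
  | succ f ih =>
    intro i
    simp only [binLoop]
    set c := reloc H (h i % E) (h i) with hc
    by_cases h1 : c < M
    · simp only [if_pos h1]; left; trivial
    · simp only [if_neg h1]
      by_cases h2 : c < n
      · rw [if_pos h2, if_pos (by omega : c < n + 1)]; left; rfl
      · rw [if_neg h2]
        by_cases h3 : c < n + 1
        · rw [if_pos h3]; right; omega
        · rw [if_neg h3]; exact ih (i + 1)

lemma binLoop_pow (H : ℕ → ℕ → ℕ) (h : ℕ → ℕ) (l : ℕ) :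
    ∀ fuel i, binLoop H (2 ^ l + 1) (2 ^ l) (2 ^ (l + 1)) h i fuel
        = reloc H (h 0 % 2 ^ l) (h 0) ∨
      binLoop H (2 ^ l + 1) (2 ^ l) (2 ^ (l + 1)) h i fuel = 2 ^ l := by
  intro fuel
  induction fuel with
  | zero => intro i; left; rfl
  | succ f ih =>
    intro i
    simp only [binLoop]
    set c := reloc H (h i % 2 ^ (l + 1)) (h i) with hc
    by_cases hb : h i % 2 ^ (l + 1) < 2 ^ l
    · have h1 : c < 2 ^ l := reloc_lt_pow H _ hb
      simp only [if_pos h1]; left; trivial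
    · push_neg at hb
      have h1 : ¬ c < 2 ^ l := not_lt.mpr (pow_le_reloc H _ hb)
      simp only [if_neg h1]
      by_cases h2 : c < 2 ^ l + 1
      · rw [if_pos h2]; right; omega
      · rw [if_neg h2]; exact ih (i + 1)

lemma binLoop_pow_old (H : ℕ → ℕ → ℕ) (h : ℕ → ℕ) (l f : ℕ) (hl : 1 ≤ l) :
    binLoop H (2 ^ l) (2 ^ (l - 1)) (2 ^ l) h 0 (f + 1)
      = reloc H (h 0 % 2 ^ l) (h 0) := by
  simp only [binLoop]
  set c := reloc H (h 0 % 2 ^ l) (h 0) with hc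
  have hcl : c < 2 ^ l := reloc_lt_pow H _ (Nat.mod_lt _ (Nat.pow_pos (by norm_num)))
  by_cases h1 : c < 2 ^ (l - 1)
  · rw [if_pos h1]
    have hb : h 0 % 2 ^ l < 2 ^ (l - 1) := by
      by_contra hb
      push_neg at hb
      exact absurd (pow_le_reloc H (h 0) hb) (not_le.mpr h1)
    have : h 0 % 2 ^ (l - 1) = h 0 % 2 ^ l := by
      rw [← Nat.mod_mod_of_dvd (h 0) (pow_dvd_pow 2 (by omega : l - 1 ≤ l))]
      exact Nat.mod_eq_of_lt hb
    rw [this]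
  · rw [if_neg h1, if_pos hcl]

/-- BinomialHash is monotone: when a new bucket `n` is added to a cluster of
`n` buckets, every key either keeps its bucket or moves to the new bucket `n`. -/
theorem binomialLookup_monotone (ω n : ℕ) (hω : 1 ≤ ω) (hn : 1 ≤ n)
    (h : ℕ → ℕ) (H : ℕ → ℕ → ℕ) :
    binomialLookup ω (n + 1) h H = binomialLookup ω n h H ∨
    binomialLookup ω (n + 1) h H = n := by
  by_cases hp : 2 ^ Nat.log 2 n = n
  · -- n is a power of two
    obtain ⟨l, rfl⟩ : ∃ l, n = 2 ^ l := ⟨Nat.log 2 n, hp.symm⟩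
    have h1l : 1 ≤ 2 ^ l := Nat.one_le_two_pow
    have hpow : (2 : ℕ) ^ (l + 1) = 2 ^ l + 2 ^ l := by ring
    have hclog : Nat.clog 2 (2 ^ l + 1) = l + 1 := by
      apply le_antisymm
      · rw [Nat.clog_le_iff_le_pow (by norm_num)]
        omega
      · by_contra hcon
        push_neg at hcon
        have h2 : Nat.clog 2 (2 ^ l + 1) ≤ l := by omega
        have := (Nat.clog_le_iff_le_pow (show (1:ℕ) < 2 by norm_num)).mp h2
        omega
    have hnew : binomialLookup ω (2 ^ l + 1) h H
        = binLoop H (2 ^ l + 1) (2 ^ l) (2 ^ (l + 1)) h 0 ω := by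
      rw [binomialLookup, if_neg (by omega), hclog]
      norm_num
    rcases binLoop_pow H h l ω 0 with hres | hres
    · rw [hnew, hres]
      left
      rcases Nat.eq_zero_or_pos l with hl0 | hl1
      · subst hl0
        norm_num [binomialLookup, reloc, Nat.mod_one]
      · have h2l : (2 : ℕ) ≤ 2 ^ l := by
          calc (2 : ℕ) = 2 ^ 1 := rfl
            _ ≤ 2 ^ l := Nat.pow_le_pow_right (by norm_num) hl1
        have hcn : Nat.clog 2 (2 ^ l) = l := Nat.clog_pow 2 l (by norm_num)
        obtain ⟨f, rfl⟩ : ∃ f, ω = f + 1 := ⟨ω - 1, by omega⟩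
        rw [binomialLookup, if_neg (by omega), hcn, binLoop_pow_old H h l f hl1]
    · rw [hnew, hres]; right; rfl
  · -- n not a power of two: n ≥ 2 and clog unchanged
    have hn2 : 2 ≤ n := by
      rcases eq_or_lt_of_le hn with h1 | h1
      · exfalso; apply hp; rw [← h1]; simp
      · omega
    have hlt : n < 2 ^ Nat.clog 2 n := by
      have hle : n ≤ 2 ^ Nat.clog 2 n := Nat.le_pow_clog (by norm_num) n
      rcases lt_or_eq_of_le hle with hlt | heq
      · exact hlt
      · exfalso
        apply hp
        rw [heq, Nat.log_pow (by norm_num)]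
    have hclog : Nat.clog 2 (n + 1) = Nat.clog 2 n := by
      apply le_antisymm
      · rw [Nat.clog_le_iff_le_pow (by norm_num)]; omega
      · exact Nat.clog_mono_right 2 (by omega)
    rw [binomialLookup, binomialLookup, if_neg (by omega), if_neg (by omega), hclog]
    exact binLoop_add_one H n _ _ h ω 0
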